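/- For every n : ℕ, every multiweight α : Fin n → Bool and all distinct indices i, j in Fin n with α i = α j, the Koszul sign of the transposition swapping i and j is sgn(α, Equiv.swap i j) = (−1)^{ε_α(i)}. In particular, if α i = α j = true the transposition has Koszul sign −1, and if α i = α j = false it has Koszul sign +1. -/
import Mathlib


/-- The Koszul sign of a multiweight `α : Fin n → Bool` and a permutation `σ`:
the product of `(-1)^(ε_α i * ε_α j)` over all inversions `i < j`, `σ j < σ i`. -/
def koszulSign {n : ℕ} (α : Fin n → Bool) (σ : Equiv.Perm (Fin n)) : ℤ :=
  ∏ p ∈ Finset.univ.filter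
      (fun p : Fin n × Fin n => p.1 < p.2 ∧ σ p.2 < σ p.1),
    (-1 : ℤ) ^ ((if α p.1 then 1 else 0) * (if α p.2 then 1 else 0))

open Equiv in
/-- The inversion set of a transposition `swap i j` with `i < j`. -/
lemma swap_inversions {n : ℕ} (i j : Fin n) (h : i < j) :
    Finset.univ.filter
      (fun p : Fin n × Fin n => p.1 < p.2 ∧ (Equiv.swap i j) p.2 < (Equiv.swap i j) p.1)
    = insert (i, j) ((Finset.Ioo i j).image (fun k => (i, k)) ∪
        (Finset.Ioo i j).image (fun k => (k, j))) := by
  ext ⟨a, b⟩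
  simp only [Finset.mem_filter, Finset.mem_univ, true_and]
  constructor
  · rintro ⟨hab, hlt⟩
    rcases eq_or_ne a i with rfl | hai
    · rcases eq_or_ne b j with rfl | hbj
      · exact Finset.mem_insert_self _ _
      · refine Finset.mem_insert_of_mem (Finset.mem_union_left _
          (Finset.mem_image.2 ⟨b, ?_, rfl⟩))
        rw [swap_apply_left, swap_apply_of_ne_of_ne (ne_of_gt hab) hbj] at hlt
        exact Finset.mem_Ioo.2 ⟨hab, hlt⟩
    · rcases eq_or_ne a j with rfl | haj
      · exfalso
        rw [swap_apply_right,
          swap_apply_of_ne_of_ne (ne_of_gt (h.trans hab)) (ne_of_gt hab)] at hlt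
        exact absurd (hlt.trans (h.trans hab)) (lt_irrefl _)
      · rw [swap_apply_of_ne_of_ne hai haj] at hlt
        rcases eq_or_ne b i with rfl | hbi
        · exfalso
          rw [swap_apply_left] at hlt
          exact absurd ((hab.trans h).trans hlt) (lt_irrefl _)
        · rcases eq_or_ne b j with rfl | hbj
          · rw [swap_apply_right] at hlt
            exact Finset.mem_insert_of_mem (Finset.mem_union_right _
              (Finset.mem_image.2 ⟨a, Finset.mem_Ioo.2 ⟨hlt, hab⟩, rfl⟩))
          · exfalso
            rw [swap_apply_of_ne_of_ne hbi hbj] at hlt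
            exact absurd (hab.trans hlt) (lt_irrefl _)
  · intro hp
    rcases Finset.mem_insert.1 hp with h1 | h1
    · rw [Prod.ext_iff] at h1
      obtain ⟨h1a, h1b⟩ := h1
      simp only at h1a h1b
      subst h1a; subst h1b
      exact ⟨h, by rw [swap_apply_left, swap_apply_right]; exact h⟩
    · rcases Finset.mem_union.1 h1 with h2 | h2
      · obtain ⟨k, hk, hkeq⟩ := Finset.mem_image.1 h2
        rw [Prod.ext_iff] at hkeq
        obtain ⟨e1, e2⟩ := hkeq
        simp only at e1 e2
        subst e1; subst e2
        obtain ⟨hk1, hk2⟩ := Finset.mem_Ioo.1 hk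
        refine ⟨hk1, ?_⟩
        rw [swap_apply_left, swap_apply_of_ne_of_ne (ne_of_gt hk1) (ne_of_lt hk2)]
        exact hk2
      · obtain ⟨k, hk, hkeq⟩ := Finset.mem_image.1 h2
        rw [Prod.ext_iff] at hkeq
        obtain ⟨e1, e2⟩ := hkeq
        simp only at e1 e2
        subst e1; subst e2
        obtain ⟨hk1, hk2⟩ := Finset.mem_Ioo.1 hk
        refine ⟨hk2, ?_⟩
        rw [swap_apply_right, swap_apply_of_ne_of_ne (ne_of_gt hk1) (ne_of_lt hk2)]
        exact hk1

/-- The ordered case of the main theorem. -/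
lemma koszulSign_swap_of_eq_aux {n : ℕ} (α : Fin n → Bool) (i j : Fin n) (h : i < j)
    (hα : α i = α j) :
    koszulSign α (Equiv.swap i j) = (-1 : ℤ) ^ (if α i then 1 else 0) := by
  unfold koszulSign
  rw [swap_inversions i j h]
  have hnotmem : (i, j) ∉ ((Finset.Ioo i j).image (fun k => (i, k)) ∪
      (Finset.Ioo i j).image (fun k => (k, j))) := by
    simp only [Finset.mem_union, Finset.mem_image, Finset.mem_Ioo, Prod.mk.injEq, not_or,
      not_exists, not_and]
    constructor
    · rintro k ⟨hk1, hk2⟩ _ rfl; exact lt_irrefl _ hk2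
    · rintro k ⟨hk1, hk2⟩ rfl; exact absurd rfl (ne_of_gt hk1)
  have hdisj : Disjoint ((Finset.Ioo i j).image (fun k => (i, k)))
      ((Finset.Ioo i j).image (fun k => (k, j))) := by
    rw [Finset.disjoint_left]
    rintro p hp1 hp2
    obtain ⟨k, hk, rfl⟩ := Finset.mem_image.1 hp1
    obtain ⟨k', hk', he⟩ := Finset.mem_image.1 hp2
    rw [Prod.ext_iff] at he
    obtain ⟨e1, e2⟩ := he
    simp only at e1 e2
    obtain ⟨hk1, hk2⟩ := Finset.mem_Ioo.1 hk
    exact absurd e2.symm (ne_of_lt hk2)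
  rw [Finset.prod_insert hnotmem, Finset.prod_union hdisj,
    Finset.prod_image (by intro x _ y _ hxy; exact (Prod.ext_iff.1 hxy).2),
    Finset.prod_image (by intro x _ y _ hxy; exact (Prod.ext_iff.1 hxy).1)]
  simp only
  have key : (∏ k ∈ Finset.Ioo i j,
        (-1 : ℤ) ^ ((if α i then 1 else 0) * (if α k then 1 else 0))) *
      (∏ k ∈ Finset.Ioo i j,
        (-1 : ℤ) ^ ((if α k then 1 else 0) * (if α j then 1 else 0))) = 1 := by
    rw [← Finset.prod_mul_distrib]
    refine Finset.prod_eq_one fun k _ => ?_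
    rw [← hα, mul_comm (if α k then 1 else 0), ← pow_add, ← two_mul, pow_mul, neg_one_sq,
      one_pow]
  rw [key, mul_one, ← hα]
  rcases α i with _ | _ <;> simp

/-- For distinct indices `i ≠ j` with `α i = α j`, the Koszul sign of the
transposition `Equiv.swap i j` is `(-1)^(ε_α i)`. -/
theorem koszulSign_swap_of_eq {n : ℕ} (α : Fin n → Bool) (i j : Fin n)
    (hij : i ≠ j) (hα : α i = α j) :
    koszulSign α (Equiv.swap i j) = (-1 : ℤ) ^ (if α i then 1 else 0) := by
  rcases lt_trichotomy i j with h | h | h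
  · exact koszulSign_swap_of_eq_aux α i j h hα
  · exact absurd h hij
  · rw [Equiv.swap_comm, hα]
    exact koszulSign_swap_of_eq_aux α j i h hα.symm
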